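/- arXiv:2009.02921 — 2 statements merged into one kernel-verified Lean document; each statement's English description precedes it below -/
import Mathlib

section
/- For any finite set of observations x_1,...,x_n on the unit sphere S^{d-1} and any number p ≥ 2 of mixture components, the likelihood function of a p-component mixture of von Mises-Fisher distributions is unbounded: there exists a sequence of parameters (mean directions, concentration parameters, mixing weights) along which the likelihood tends to infinity. -/
open scoped RealInnerProductSpace BigOperators ENNReal NNReal Classical
open MeasureTheory Filter Real ProbabilityTheory Asymptotics

/-- Modified Bessel function of the first kind of order `r`. -/
noncomputable def besselI (r z : ℝ) : ℝ :=
  ∑' m : ℕ, (z / 2) ^ (2 * (m : ℝ) + r) / ((Nat.factorial m) * Real.Gamma ((m : ℝ) + r + 1))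

/-- Normalizing constant of the `d`-dimensional von Mises-Fisher density. -/
noncomputable def vmfConst (d : ℕ) (κ : ℝ) : ℝ :=
  κ ^ ((d : ℝ) / 2 - 1) / ((2 * Real.pi) ^ ((d : ℝ) / 2) * besselI ((d : ℝ) / 2 - 1) κ)

/-- von Mises-Fisher density with mean direction `μ` and concentration `κ`. -/
noncomputable def vmfDensity (d : ℕ) (μ x : EuclideanSpace ℝ (Fin d)) (κ : ℝ) : ℝ :=
  vmfConst d κ * Real.exp (κ * ⟪μ, x⟫)

/-- The unit sphere `S^{d-1}` in `ℝ^d`. -/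
abbrev Sph (d : ℕ) := Metric.sphere (0 : EuclideanSpace ℝ (Fin d)) 1

/-- Open geodesic ball of radius `r` centered at `μ` on the unit sphere. -/
noncomputable def gBall {d : ℕ} (μ : Sph d) (r : ℝ) : Set (Sph d) :=
  {y | Real.arccos ⟪(μ : EuclideanSpace ℝ (Fin d)), (y : EuclideanSpace ℝ (Fin d))⟫ < r}

/-- Surface measure on the unit sphere, realized as `(d-1)`-dimensional Hausdorff measure. -/
noncomputable def sphMeasure (d : ℕ) : Measure (Sph d) := μH[(d : ℝ) - 1]

/-- The constant `A₂ = 2^{d-1} · 2π^{(d-1)/2} / Γ((d-1)/2)`. -/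
noncomputable def A2val (d : ℕ) : ℝ :=
  2 ^ (d - 1) * (2 * Real.pi ^ (((d : ℝ) - 1) / 2) / Real.Gamma (((d : ℝ) - 1) / 2))


/-- step ratio identity -/
lemma exp_term_succ (x : ℝ) (k : ℕ) :
    x ^ (k+1) / (Nat.factorial (k+1) : ℝ) = x ^ k / (Nat.factorial k : ℝ) * (x / (k+1)) := by
  have hfac : ((Nat.factorial (k+1) : ℕ) : ℝ) = ((k:ℝ)+1) * (Nat.factorial k : ℝ) := by
    rw [Nat.factorial_succ]; push_cast; ring
  have h1 : (Nat.factorial k : ℝ) ≠ 0 := Nat.cast_ne_zero.mpr (Nat.factorial_ne_zero k)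
  have h2 : ((k:ℝ) + 1) ≠ 0 := by positivity
  rw [pow_succ, hfac]
  field_simp

/-- Lemma A: each exp-series term is at most the term at ⌊x⌋. -/
lemma exp_term_le_max (x : ℝ) (hx : 1 ≤ x) (m : ℕ) :
    x ^ m / (Nat.factorial m : ℝ) ≤ x ^ (⌊x⌋₊) / (Nat.factorial ⌊x⌋₊ : ℝ) := by
  set N := ⌊x⌋₊ with hN
  have hx0 : 0 < x := by linarith
  have hup : ∀ k, k < N → x ^ k / (Nat.factorial k : ℝ) ≤ x ^ (k+1) / (Nat.factorial (k+1) : ℝ) := by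
    intro k hk
    rw [exp_term_succ]
    have hk1 : (k:ℝ) + 1 ≤ x := by
      have hfl : (k + 1 : ℕ) ≤ N := hk
      have hfl2 : ((k+1:ℕ):ℝ) ≤ (N:ℝ) := Nat.cast_le.mpr hfl
      have hfl3 : (N:ℝ) ≤ x := Nat.floor_le hx0.le
      push_cast at hfl2; linarith
    have hpos : (0:ℝ) < (k:ℝ) + 1 := by positivity
    have h1 : 1 ≤ x / ((k:ℝ)+1) := (one_le_div hpos).mpr hk1
    nlinarith [pow_nonneg hx0.le k, (Nat.cast_pos (α:=ℝ)).mpr (Nat.factorial_pos k),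
      div_nonneg (pow_nonneg hx0.le k) (Nat.cast_nonneg (Nat.factorial k))]
  have hdown : ∀ k, N ≤ k → x ^ (k+1) / (Nat.factorial (k+1) : ℝ) ≤ x ^ k / (Nat.factorial k : ℝ) := by
    intro k hk
    rw [exp_term_succ]
    have hk1 : x ≤ (k:ℝ) + 1 := by
      have := Nat.lt_floor_add_one x
      have : x < (N:ℝ) + 1 := by exact_mod_cast this
      have hkk : (N:ℝ) ≤ (k:ℝ) := by exact_mod_cast hk
      linarith
    have hpos : (0:ℝ) < (k:ℝ) + 1 := by positivity
    have h1 : x / ((k:ℝ)+1) ≤ 1 := (div_le_one hpos).mpr hk1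
    nlinarith [div_nonneg (pow_nonneg hx0.le k) (Nat.cast_nonneg (Nat.factorial k))]
  rcases le_or_gt m N with h | h
  · -- m ≤ N : climb up
    have : ∀ j, j ≤ N → x ^ (N - j) / (Nat.factorial (N - j) : ℝ) ≤ x ^ N / (Nat.factorial N : ℝ) := by
      intro j
      induction j with
      | zero => simp
      | succ i ih =>
        intro hij
        have hi : i ≤ N := by omega
        have heq : N - (i+1) + 1 = N - i := by omega
        have hlt : N - (i+1) < N := by omega
        calc x ^ (N - (i+1)) / (Nat.factorial (N-(i+1)) : ℝ)
            ≤ x ^ (N - (i+1) + 1) / (Nat.factorial (N-(i+1)+1) : ℝ) := hup _ hlt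
          _ = x ^ (N - i) / (Nat.factorial (N-i) : ℝ) := by rw [heq]
          _ ≤ _ := ih hi
    have := this (N - m) (by omega)
    have heq : N - (N - m) = m := by omega
    rwa [heq] at this
  · -- N < m: descend
    have : ∀ j, x ^ (N + j) / (Nat.factorial (N + j) : ℝ) ≤ x ^ N / (Nat.factorial N : ℝ) := by
      intro j
      induction j with
      | zero => simp
      | succ i ih =>
        have : x ^ (N + i + 1) / (Nat.factorial (N + i + 1) : ℝ)
            ≤ x ^ (N+i) / (Nat.factorial (N+i) : ℝ) := hdown _ (by omega)
        have heq : N + (i+1) = N + i + 1 := by omega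
        rw [heq]
        exact le_trans this ih
    have := this (m - N)
    have heq : N + (m - N) = m := by omega
    rwa [heq] at this


/-- Lemma B: the max exp-series term is ≤ 2e·e^x/√x for x ≥ 4. -/
lemma exp_max_term_le (x : ℝ) (hx : 4 ≤ x) :
    x ^ (⌊x⌋₊) / (Nat.factorial ⌊x⌋₊ : ℝ) ≤ 2 * Real.exp 1 * Real.exp x / Real.sqrt x := by
  set N := ⌊x⌋₊ with hN
  set s := Real.sqrt x with hs
  have hx0 : (0:ℝ) < x := by linarith
  have hs2 : 2 ≤ s := by
    rw [hs, show (2:ℝ) = Real.sqrt 4 by rw [show (4:ℝ) = 2^2 by norm_num, Real.sqrt_sq (by norm_num)]]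
    exact Real.sqrt_le_sqrt hx
  have hs0 : 0 < s := by linarith
  have hss : s * s = x := Real.mul_self_sqrt hx0.le
  set J := ⌊s⌋₊ with hJ
  have hJ1 : 1 ≤ J := by
    rw [hJ]; exact Nat.le_floor (by push_cast; linarith)
  have hJs : (J:ℝ) ≤ s := Nat.floor_le hs0.le
  have hJs' : s - 1 ≤ (J:ℝ) := by
    have := Nat.lt_floor_add_one s; push_cast at this; linarith
  set aN := x ^ N / (Nat.factorial N : ℝ) with haN
  have haN0 : 0 ≤ aN := by positivity
  have hNx : (N:ℝ) ≤ x := Nat.floor_le hx0.le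
  -- ratio bound : a (N+j) ≥ aN * (x/(x+s))^j for j ≤ J
  have hrat : ∀ j, j ≤ J → aN * (x/(x+s))^j ≤ x ^ (N+j) / (Nat.factorial (N+j) : ℝ) := by
    intro j
    induction j with
    | zero => simp [haN]
    | succ i ih =>
      intro hij
      have hi : i ≤ J := by omega
      have step : x ^ (N+i) / (Nat.factorial (N+i) : ℝ) * (x/(x+s))
          ≤ x ^ (N+i+1) / (Nat.factorial (N+i+1) : ℝ) := by
        rw [exp_term_succ x (N+i)]
        have hden : ((N:ℝ) + i + 1) ≤ x + s := by
          have hiJ : ((i:ℝ) + 1) ≤ (J:ℝ) := by exact_mod_cast hij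
          push_cast
          linarith [hJs]
        have hpos1 : (0:ℝ) < (N:ℝ) + i + 1 := by positivity
        have hpos2 : (0:ℝ) < x + s := by linarith
        have hfr : x/(x+s) ≤ x/((N:ℝ)+i+1) := by
          apply div_le_div_of_nonneg_left hx0.le hpos1
          · push_cast at hden ⊢; linarith
        have hterm : (0:ℝ) ≤ x ^ (N+i) / (Nat.factorial (N+i) : ℝ) := by positivity
        have : ((N:ℝ)+(i:ℝ)+1) = (((N+i:ℕ)):ℝ)+1 := by push_cast; ring
        calc x ^ (N+i) / (Nat.factorial (N+i) : ℝ) * (x/(x+s))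
            ≤ x ^ (N+i) / (Nat.factorial (N+i) : ℝ) * (x/((N:ℝ)+i+1)) :=
              mul_le_mul_of_nonneg_left hfr hterm
          _ = x ^ (N+i) / (Nat.factorial (N+i) : ℝ) * (x/(((N+i:ℕ):ℝ)+1)) := by
              rw [← this]
      have heq : N + (i+1) = (N + i) + 1 := by omega
      rw [heq, pow_succ, ← mul_assoc]
      exact le_trans (mul_le_mul_of_nonneg_right (ih hi) (by positivity)) step
  -- (x/(x+s))^J ≥ e⁻¹
  have hratJ : (Real.exp 1)⁻¹ ≤ (x/(x+s))^J := by
    have hpos2 : (0:ℝ) < x + s := by linarith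
    have hfrac : (0:ℝ) < x/(x+s) := by positivity
    have key : ((x+s)/x)^J ≤ Real.exp 1 := by
      have h1 : (x+s)/x = 1 + s/x := by field_simp
      have h2 : 1 + s/x ≤ Real.exp (s/x) := by
        have := Real.add_one_le_exp (s/x); linarith
      calc ((x+s)/x)^J ≤ (Real.exp (s/x))^J := by
            apply pow_le_pow_left₀ (by positivity) (by rw [h1]; exact h2)
        _ = Real.exp ((J:ℝ) * (s/x)) := by rw [← Real.exp_nat_mul]
        _ ≤ Real.exp 1 := by
            apply Real.exp_le_exp.mpr
            rw [div_eq_mul_inv]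
            have : (J:ℝ) * (s * x⁻¹) ≤ s * (s * x⁻¹) := by
              apply mul_le_mul_of_nonneg_right hJs (by positivity)
            calc (J:ℝ) * (s * x⁻¹) ≤ s * (s * x⁻¹) := this
              _ = (s*s) * x⁻¹ := by ring
              _ = 1 := by rw [hss]; field_simp
    have hinv : (x/(x+s))^J = (((x+s)/x)^J)⁻¹ := by
      rw [← inv_pow]; congr 1; rw [inv_div]
    rw [hinv]
    exact inv_anti₀ (by positivity) key
  -- sum bound
  have hsum : (J:ℝ) * (aN * (Real.exp 1)⁻¹) ≤ Real.exp x := by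
    have h1 : ∀ j ∈ Finset.range J, aN * (Real.exp 1)⁻¹ ≤ x ^ (N+(j+1)) / (Nat.factorial (N+(j+1)) : ℝ) := by
      intro j hj
      simp only [Finset.mem_range] at hj
      have hj1 : j + 1 ≤ J := hj
      refine le_trans ?_ (hrat (j+1) hj1)
      apply mul_le_mul_of_nonneg_left _ haN0
      calc (Real.exp 1)⁻¹ ≤ (x/(x+s))^J := hratJ
        _ ≤ (x/(x+s))^(j+1) := by
            apply pow_le_pow_of_le_one (by positivity) _ hj1
            rw [div_le_one (by linarith)]; linarith
    have h2 : ∑ j ∈ Finset.range J, (aN * (Real.exp 1)⁻¹)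
        ≤ ∑ j ∈ Finset.range J, x ^ (N+(j+1)) / (Nat.factorial (N+(j+1)) : ℝ) :=
      Finset.sum_le_sum h1
    rw [Finset.sum_const, Finset.card_range, nsmul_eq_mul] at h2
    refine h2.trans ?_
    -- reindex into a sub-sum of the exp partial sum
    have h3 : ∑ j ∈ Finset.range J, x ^ (N+(j+1)) / (Nat.factorial (N+(j+1)) : ℝ)
        = ∑ i ∈ Finset.Ico (N+1) (N+1+J), x ^ i / (Nat.factorial i : ℝ) := by
      rw [Finset.sum_Ico_eq_sum_range, show N+1+J-(N+1) = J from by omega]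
      exact Finset.sum_congr rfl (fun j _ => by rw [show N+(j+1) = N+1+j from by omega])
    rw [h3]
    have h4 : Finset.Ico (N+1) (N+1+J) ⊆ Finset.range (N+1+J) := by
      intro i hi; simp only [Finset.mem_Ico] at hi; simp only [Finset.mem_range]; omega
    calc ∑ i ∈ Finset.Ico (N+1) (N+1+J), x ^ i / (Nat.factorial i : ℝ)
        ≤ ∑ i ∈ Finset.range (N+1+J), x ^ i / (Nat.factorial i : ℝ) :=
          Finset.sum_le_sum_of_subset_of_nonneg h4 (fun i _ _ => by positivity)
      _ ≤ Real.exp x := Real.sum_le_exp_of_nonneg hx0.le _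
  -- conclude
  have hJhalf : s/2 ≤ (J:ℝ) := by linarith
  have hJpos : (0:ℝ) < (J:ℝ) := by
    have : (1:ℝ) ≤ (J:ℝ) := by exact_mod_cast hJ1
    linarith
  have he1 : (0:ℝ) < Real.exp 1 := Real.exp_pos 1
  have hstep : aN ≤ Real.exp 1 * Real.exp x / (J:ℝ) := by
    rw [le_div_iff₀ hJpos]
    have := hsum
    calc aN * (J:ℝ) = ((J:ℝ) * (aN * (Real.exp 1)⁻¹)) * Real.exp 1 := by field_simp
      _ ≤ Real.exp x * Real.exp 1 := mul_le_mul_of_nonneg_right hsum he1.le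
      _ = Real.exp 1 * Real.exp x := by ring
  refine hstep.trans ?_
  rw [div_le_div_iff₀ hJpos hs0]
  have hnum : (0:ℝ) ≤ Real.exp 1 * Real.exp x := by positivity
  calc Real.exp 1 * Real.exp x * s ≤ Real.exp 1 * Real.exp x * (2 * (J:ℝ)) := by
        apply mul_le_mul_of_nonneg_left _ hnum
        linarith
    _ = 2 * Real.exp 1 * Real.exp x * (J:ℝ) := by ring

lemma Gamma_factorial_le (r : ℝ) (hr : 0 ≤ r) (m : ℕ) :
    (Nat.factorial m : ℝ) * Real.Gamma (r+1) ≤ Real.Gamma ((m:ℝ) + r + 1) := by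
  induction m with
  | zero => simp
  | succ k ih =>
    have hpos : (0:ℝ) < (k:ℝ) + r + 1 := by positivity
    have hG : Real.Gamma (((k:ℕ):ℝ) + 1 + r + 1) = ((k:ℝ) + r + 1) * Real.Gamma ((k:ℝ) + r + 1) := by
      rw [show ((k:ℕ):ℝ) + 1 + r + 1 = ((k:ℝ) + r + 1) + 1 by ring, Real.Gamma_add_one (ne_of_gt hpos)]
    have hcast : ((k+1:ℕ):ℝ) = (k:ℝ) + 1 := by push_cast; ring
    rw [hcast, hG]
    have hfac : ((Nat.factorial (k+1) : ℕ) : ℝ) = ((k:ℝ)+1) * (Nat.factorial k : ℝ) := by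
      rw [Nat.factorial_succ]; push_cast; ring
    rw [hfac]
    have hGpos : 0 < Real.Gamma ((k:ℝ) + r + 1) := Real.Gamma_pos_of_pos hpos
    have h1 : ((k:ℝ)+1) * ((Nat.factorial k : ℝ) * Real.Gamma (r+1))
        ≤ ((k:ℝ)+1) * Real.Gamma ((k:ℝ) + r + 1) :=
      mul_le_mul_of_nonneg_left ih (by positivity)
    have h2 : ((k:ℝ)+1) * Real.Gamma ((k:ℝ) + r + 1)
        ≤ ((k:ℝ) + r + 1) * Real.Gamma ((k:ℝ) + r + 1) :=
      mul_le_mul_of_nonneg_right (by linarith) hGpos.le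
    calc ((k:ℝ)+1) * (Nat.factorial k : ℝ) * Real.Gamma (r+1)
        = ((k:ℝ)+1) * ((Nat.factorial k : ℝ) * Real.Gamma (r+1)) := by ring
      _ ≤ ((k:ℝ)+1) * Real.Gamma ((k:ℝ) + r + 1) := h1
      _ ≤ _ := h2

lemma besselI_term_nonneg (r z : ℝ) (hr : 0 ≤ r) (hz : 0 ≤ z) (m : ℕ) :
    0 ≤ (z / 2) ^ (2 * (m : ℝ) + r) / ((Nat.factorial m) * Real.Gamma ((m : ℝ) + r + 1)) := by
  have hG : 0 < Real.Gamma ((m:ℝ) + r + 1) := Real.Gamma_pos_of_pos (by positivity)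
  have hfac : (0:ℝ) < (Nat.factorial m : ℝ) := by exact_mod_cast Nat.factorial_pos m
  exact div_nonneg (Real.rpow_nonneg (by linarith) _) (by positivity)

lemma besselI_nonneg (r z : ℝ) (hr : 0 ≤ r) (hz : 0 ≤ z) : 0 ≤ besselI r z :=
  tsum_nonneg (besselI_term_nonneg r z hr hz)

lemma besselI_term_le (r z : ℝ) (hr : 0 ≤ r) (hz : 8 ≤ z) (m : ℕ) :
    (z / 2) ^ (2 * (m : ℝ) + r) / ((Nat.factorial m) * Real.Gamma ((m : ℝ) + r + 1))
      ≤ ((z/2) ^ r / Real.Gamma (r+1) * (2 * Real.exp 1 * Real.exp (z/2) / Real.sqrt (z/2)))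
        * ((z/2) ^ m / (Nat.factorial m : ℝ)) := by
  have hx : (4:ℝ) ≤ z/2 := by linarith
  have hx0 : (0:ℝ) < z/2 := by linarith
  have hGr : 0 < Real.Gamma (r+1) := Real.Gamma_pos_of_pos (by positivity)
  have hGm : 0 < Real.Gamma ((m:ℝ) + r + 1) := Real.Gamma_pos_of_pos (by positivity)
  have hfac : (0:ℝ) < (Nat.factorial m : ℝ) := by exact_mod_cast Nat.factorial_pos m
  have hrw : (z / 2) ^ (2 * (m : ℝ) + r) = ((z/2)^m)^2 * (z/2) ^ r := by
    rw [Real.rpow_add hx0, show (2*(m:ℝ)) = ((2*m:ℕ):ℝ) by push_cast; ring, Real.rpow_natCast,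
      show 2*m = m*2 by ring, pow_mul]
  rw [hrw]
  -- step 1: enlarge denominator
  have h1 : ((z/2)^m)^2 * (z/2) ^ r / ((Nat.factorial m) * Real.Gamma ((m:ℝ) + r + 1))
      ≤ ((z/2)^m)^2 * (z/2) ^ r / ((Nat.factorial m) * ((Nat.factorial m) * Real.Gamma (r+1))) := by
    apply div_le_div_of_nonneg_left (by positivity) (by positivity)
    exact mul_le_mul_of_nonneg_left (Gamma_factorial_le r hr m) hfac.le
  refine h1.trans ?_
  -- step 2: use max-term bound on one factor
  have hu : (z/2)^m / (Nat.factorial m : ℝ) ≤ 2 * Real.exp 1 * Real.exp (z/2) / Real.sqrt (z/2) := by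
    refine (exp_term_le_max (z/2) (by linarith) m).trans (exp_max_term_le (z/2) hx)
  have hu0 : (0:ℝ) ≤ (z/2)^m / (Nat.factorial m : ℝ) := by positivity
  have heq : ((z/2)^m)^2 * (z/2) ^ r / ((Nat.factorial m) * ((Nat.factorial m) * Real.Gamma (r+1)))
      = ((z/2) ^ r / Real.Gamma (r+1)) * (((z/2)^m / (Nat.factorial m : ℝ)) * ((z/2)^m / (Nat.factorial m : ℝ))) := by
    field_simp
  rw [heq]
  calc ((z/2) ^ r / Real.Gamma (r+1)) * (((z/2)^m / (Nat.factorial m : ℝ)) * ((z/2)^m / (Nat.factorial m : ℝ)))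
      ≤ ((z/2) ^ r / Real.Gamma (r+1)) * ((2 * Real.exp 1 * Real.exp (z/2) / Real.sqrt (z/2)) * ((z/2)^m / (Nat.factorial m : ℝ))) := by
        apply mul_le_mul_of_nonneg_left _ (by positivity)
        exact mul_le_mul_of_nonneg_right hu hu0
    _ = _ := by ring

lemma besselI_le (r z : ℝ) (hr : 0 ≤ r) (hz : 8 ≤ z) :
    besselI r z ≤ (z/2) ^ r / Real.Gamma (r+1) * (2 * Real.exp 1 * Real.exp z / Real.sqrt (z/2)) := by
  have hx0 : (0:ℝ) < z/2 := by linarith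
  set C := (z/2) ^ r / Real.Gamma (r+1) * (2 * Real.exp 1 * Real.exp (z/2) / Real.sqrt (z/2)) with hC
  have hC0 : 0 ≤ C := by positivity
  have key : besselI r z ≤ C * Real.exp (z/2) := by
    apply Real.tsum_le_of_sum_range_le (besselI_term_nonneg r z hr (by linarith))
    intro nn
    calc ∑ i ∈ Finset.range nn, (z / 2) ^ (2 * (i : ℝ) + r) / ((Nat.factorial i) * Real.Gamma ((i : ℝ) + r + 1))
        ≤ ∑ i ∈ Finset.range nn, C * ((z/2) ^ i / (Nat.factorial i : ℝ)) :=
          Finset.sum_le_sum (fun i _ => besselI_term_le r z hr hz i)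
      _ = C * ∑ i ∈ Finset.range nn, ((z/2) ^ i / (Nat.factorial i : ℝ)) := by rw [Finset.mul_sum]
      _ ≤ C * Real.exp (z/2) :=
          mul_le_mul_of_nonneg_left (Real.sum_le_exp_of_nonneg hx0.le nn) hC0
  refine key.trans (le_of_eq ?_)
  rw [hC]
  rw [show Real.exp z = Real.exp (z/2) * Real.exp (z/2) by rw [← Real.exp_add]; ring_nf]
  ring

lemma besselI_summable (r z : ℝ) (hr : 0 ≤ r) (hz : 8 ≤ z) :
    Summable (fun m : ℕ => (z / 2) ^ (2 * (m : ℝ) + r) / ((Nat.factorial m) * Real.Gamma ((m : ℝ) + r + 1))) := by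
  apply Summable.of_nonneg_of_le (besselI_term_nonneg r z hr (by linarith))
    (besselI_term_le r z hr hz)
  exact (Real.summable_pow_div_factorial (z/2)).mul_left _

lemma besselI_pos (r z : ℝ) (hr : 0 ≤ r) (hz : 8 ≤ z) : 0 < besselI r z := by
  have h0 : (0:ℝ) < (z/2) ^ r / Real.Gamma (r+1) := by
    have := Real.Gamma_pos_of_pos (show (0:ℝ) < r+1 by positivity)
    have : (0:ℝ) < (z/2) ^ r := Real.rpow_pos_of_pos (by linarith) r
    positivity
  have ht0 : (z / 2) ^ (2 * ((0:ℕ) : ℝ) + r) / ((Nat.factorial 0) * Real.Gamma (((0:ℕ) : ℝ) + r + 1))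
      = (z/2) ^ r / Real.Gamma (r+1) := by
    norm_num
  calc (0:ℝ) < (z/2) ^ r / Real.Gamma (r+1) := h0
    _ = _ := ht0.symm
    _ ≤ besselI r z := Summable.le_tsum (besselI_summable r z hr hz) 0
        (fun i _ => besselI_term_nonneg r z hr (by linarith) i)


lemma vmfConst_nonneg (d : ℕ) (hd : 2 ≤ d) (κ : ℝ) (hκ : 0 ≤ κ) : 0 ≤ vmfConst d κ := by
  have hr : (0:ℝ) ≤ (d:ℝ)/2 - 1 := by
    have : (2:ℝ) ≤ (d:ℝ) := by exact_mod_cast hd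
    linarith
  apply div_nonneg (Real.rpow_nonneg hκ _)
  apply mul_nonneg (Real.rpow_nonneg (by positivity) _)
  exact besselI_nonneg _ _ hr hκ

lemma vmfConst_pos (d : ℕ) (hd : 2 ≤ d) (κ : ℝ) (hκ : 8 ≤ κ) : 0 < vmfConst d κ := by
  have hr : (0:ℝ) ≤ (d:ℝ)/2 - 1 := by
    have : (2:ℝ) ≤ (d:ℝ) := by exact_mod_cast hd
    linarith
  have h1 : (0:ℝ) < κ ^ ((d:ℝ)/2 - 1) := Real.rpow_pos_of_pos (by linarith) _
  have h2 : (0:ℝ) < (2*Real.pi) ^ ((d:ℝ)/2) := Real.rpow_pos_of_pos (by positivity) _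
  have h3 : (0:ℝ) < besselI ((d:ℝ)/2-1) κ := besselI_pos _ _ hr hκ
  rw [vmfConst]
  positivity

/-- Main growth: vmfConst d z * exp z ≥ c · √(z/2) for z ≥ 8. -/
lemma vmfConst_mul_exp_ge (d : ℕ) (hd : 2 ≤ d) (z : ℝ) (hz : 8 ≤ z) :
    Real.Gamma ((d:ℝ)/2) / ((2*Real.pi) ^ ((d:ℝ)/2) * (2 * Real.exp 1)) * Real.sqrt (z/2)
      ≤ vmfConst d z * Real.exp z := by
  set r := (d:ℝ)/2 - 1 with hrdef
  have hr : (0:ℝ) ≤ r := by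
    have : (2:ℝ) ≤ (d:ℝ) := by exact_mod_cast hd
    rw [hrdef]; linarith
  have hz0 : (0:ℝ) < z := by linarith
  have hx0 : (0:ℝ) < z/2 := by linarith
  have hGr : 0 < Real.Gamma (r+1) := Real.Gamma_pos_of_pos (by positivity)
  have hP : (0:ℝ) < (2*Real.pi) ^ (r+1:ℝ) := Real.rpow_pos_of_pos (by positivity) _
  have hB : (0:ℝ) < besselI r z := besselI_pos r z hr hz
  have hs : (0:ℝ) < Real.sqrt (z/2) := Real.sqrt_pos.mpr hx0
  have hBle : besselI r z ≤ (z/2) ^ r / Real.Gamma (r+1) * (2 * Real.exp 1 * Real.exp z / Real.sqrt (z/2)) :=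
    besselI_le r z hr hz
  have hr1 : r + 1 = (d:ℝ)/2 := by rw [hrdef]; ring
  have hzr : (z/2) ^ r ≤ z ^ r := Real.rpow_le_rpow (by linarith) (by linarith) hr
  have hzr0 : (0:ℝ) < z ^ r := Real.rpow_pos_of_pos hz0 _
  -- goal: c * √(z/2) ≤ z^r/(P·B) · e^z
  have hrhs : vmfConst d z * Real.exp z = z ^ r * Real.exp z / ((2*Real.pi) ^ ((d:ℝ)/2) * besselI r z) := by
    rw [vmfConst, hrdef]; ring
  rw [hrhs, ← hr1]
  rw [le_div_iff₀ (by positivity)]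
  -- suffices : c √(z/2) P B ≤ z^r e^z
  have key : Real.Gamma (r+1) / ((2*Real.pi) ^ (r+1) * (2 * Real.exp 1)) * Real.sqrt (z/2)
      * ((2*Real.pi) ^ (r+1) * besselI r z)
      ≤ Real.Gamma (r+1) / ((2*Real.pi) ^ (r+1) * (2 * Real.exp 1)) * Real.sqrt (z/2)
      * ((2*Real.pi) ^ (r+1) * ((z/2) ^ r / Real.Gamma (r+1) * (2 * Real.exp 1 * Real.exp z / Real.sqrt (z/2)))) := by
    apply mul_le_mul_of_nonneg_left _ (by positivity)
    exact mul_le_mul_of_nonneg_left hBle hP.le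
  refine key.trans ?_
  have hsimp : Real.Gamma (r+1) / ((2*Real.pi) ^ (r+1) * (2 * Real.exp 1)) * Real.sqrt (z/2)
      * ((2*Real.pi) ^ (r+1) * ((z/2) ^ r / Real.Gamma (r+1) * (2 * Real.exp 1 * Real.exp z / Real.sqrt (z/2))))
      = (z/2) ^ r * Real.exp z := by
    field_simp
  rw [hsimp]
  exact mul_le_mul_of_nonneg_right hzr (Real.exp_pos z).le

lemma tendsto_sqrt_atTop' : Tendsto Real.sqrt atTop atTop := by
  apply tendsto_atTop_atTop.mpr
  intro b
  refine ⟨(max b 0)^2, fun a ha => ?_⟩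
  have h1 : Real.sqrt ((max b 0)^2) ≤ Real.sqrt a := Real.sqrt_le_sqrt ha
  rw [Real.sqrt_sq (le_max_right b 0)] at h1
  exact le_trans (le_max_left b 0) h1

lemma vmf_growth (d : ℕ) (hd : 2 ≤ d) :
    Tendsto (fun q : ℕ => vmfConst d q * Real.exp q) atTop atTop := by
  set c := Real.Gamma ((d:ℝ)/2) / ((2*Real.pi) ^ ((d:ℝ)/2) * (2 * Real.exp 1)) with hc
  have hd2 : (0:ℝ) < (d:ℝ)/2 := by
    have : (2:ℝ) ≤ (d:ℝ) := by exact_mod_cast hd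
    linarith
  have hc0 : 0 < c := by
    have hG := Real.Gamma_pos_of_pos hd2
    have hP : (0:ℝ) < (2*Real.pi) ^ ((d:ℝ)/2) := Real.rpow_pos_of_pos (by positivity) _
    rw [hc]; positivity
  have htend : Tendsto (fun q : ℕ => c * Real.sqrt ((q:ℝ)/2)) atTop atTop := by
    apply Tendsto.const_mul_atTop hc0
    exact tendsto_sqrt_atTop'.comp ((tendsto_natCast_atTop_atTop (R := ℝ)).atTop_div_const (by norm_num))
  apply tendsto_atTop_mono' atTop _ htend
  filter_upwards [eventually_ge_atTop 8] with q hq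
  exact vmfConst_mul_exp_ge d hd (q:ℝ) (by exact_mod_cast hq)

/-- the likelihood of a `p`-component vMF mixture is unbounded. -/
theorem vmf_mixture_likelihood_unbounded
    {d n p : ℕ} (hd : 2 ≤ d) (hn : 1 ≤ n) (hp : 2 ≤ p)
    (x : Fin n → EuclideanSpace ℝ (Fin d))
    (hx : ∀ i, x i ∈ Metric.sphere (0 : EuclideanSpace ℝ (Fin d)) 1) :
    ∃ (μ : ℕ → Fin p → EuclideanSpace ℝ (Fin d)) (κ : ℕ → Fin p → ℝ) (w : ℕ → Fin p → ℝ),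
      (∀ q k, μ q k ∈ Metric.sphere (0 : EuclideanSpace ℝ (Fin d)) 1) ∧
      (∀ q k, 0 ≤ κ q k) ∧
      (∀ q k, 0 ≤ w q k) ∧
      (∀ q, ∑ k, w q k = 1) ∧
      Tendsto (fun q => ∏ i, ∑ k, w q k * vmfDensity d (μ q k) (x i) (κ q k)) atTop atTop := by
  have i₀ : Fin n := ⟨0, hn⟩
  set x0 := x i₀ with hx0def
  have hx0 : ‖x0‖ = 1 := by
    have := hx i₀
    rwa [mem_sphere_zero_iff_norm] at this
  set k0 : Fin p := ⟨0, by omega⟩ with hk0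
  set k1 : Fin p := ⟨1, by omega⟩ with hk1
  have hk01 : k0 ≠ k1 := by
    intro h
    have h2 : (0:ℕ) = 1 := congrArg Fin.val h
    omega
  refine ⟨fun q k => x0, fun q k => if k = k0 then (q:ℝ) else 8,
    fun q k => (if k = k0 then (1/2:ℝ) else 0) + (if k = k1 then (1/2:ℝ) else 0), ?_, ?_, ?_, ?_, ?_⟩
  · intro q k; exact hx i₀
  · intro q k
    dsimp only
    split
    · positivity
    · norm_num
  · intro q k
    refine add_nonneg ?_ ?_ <;> split <;> norm_num
  · intro q
    rw [Finset.sum_add_distrib, Finset.sum_ite_eq' Finset.univ k0 (fun _ => (1/2:ℝ)),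
      Finset.sum_ite_eq' Finset.univ k1 (fun _ => (1/2:ℝ))]
    simp only [Finset.mem_univ, if_true]
    norm_num
  · -- the main tendsto claim
    have hsum : ∀ (q : ℕ) (i : Fin n),
        (∑ k, ((if k = k0 then (1/2:ℝ) else 0) + (if k = k1 then (1/2:ℝ) else 0)) *
          vmfDensity d x0 (x i) (if k = k0 then (q:ℝ) else 8))
        = (1/2) * vmfDensity d x0 (x i) (q:ℝ) + (1/2) * vmfDensity d x0 (x i) 8 := by
      intro q i
      have : ∀ k : Fin p, ((if k = k0 then (1/2:ℝ) else 0) + (if k = k1 then (1/2:ℝ) else 0)) *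
          vmfDensity d x0 (x i) (if k = k0 then (q:ℝ) else 8)
          = (if k = k0 then (1/2:ℝ) * vmfDensity d x0 (x i) (q:ℝ) else 0)
            + (if k = k1 then (1/2:ℝ) * vmfDensity d x0 (x i) 8 else 0) := by
        intro k
        by_cases h : k = k0
        · subst h
          simp [hk01]
        · by_cases h' : k = k1
          · subst h'
            simp [h]
          · simp [h, h']
      rw [Finset.sum_congr rfl (fun k _ => this k), Finset.sum_add_distrib,
        Finset.sum_ite_eq' Finset.univ k0, Finset.sum_ite_eq' Finset.univ k1]
      simp
    -- inner product bounds
    have hinner1 : ⟪x0, x0⟫ = (1:ℝ) := by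
      rw [real_inner_self_eq_norm_sq, hx0]; norm_num
    have hinnerlow : ∀ i, (-1:ℝ) ≤ ⟪x0, x i⟫ := by
      intro i
      have h1 : |⟪x0, x i⟫| ≤ ‖x0‖ * ‖x i‖ := abs_real_inner_le_norm x0 (x i)
      have h2 : ‖x i‖ = 1 := by
        have := hx i; rwa [mem_sphere_zero_iff_norm] at this
      rw [hx0, h2] at h1
      have := neg_abs_le ⟪x0, x i⟫
      linarith [abs_le.mp h1]
    set cc := (1/2:ℝ) * (vmfConst d 8 * Real.exp (-8)) with hcc
    have hcc0 : 0 < cc := by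
      have := vmfConst_pos d hd 8 le_rfl
      rw [hcc]; positivity
    -- per-factor lower bounds
    have hfac_low : ∀ (q : ℕ) (i : Fin n),
        cc ≤ (1/2) * vmfDensity d x0 (x i) (q:ℝ) + (1/2) * vmfDensity d x0 (x i) 8 := by
      intro q i
      have h1 : 0 ≤ (1/2) * vmfDensity d x0 (x i) (q:ℝ) := by
        have := vmfConst_nonneg d hd (q:ℝ) (by positivity)
        rw [vmfDensity]; positivity
      have h2 : cc ≤ (1/2) * vmfDensity d x0 (x i) 8 := by
        rw [hcc, vmfDensity]
        have hc8 := (vmfConst_pos d hd 8 le_rfl).le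
        have hexp : Real.exp (-8) ≤ Real.exp (8 * ⟪x0, x i⟫) := by
          apply Real.exp_le_exp.mpr
          have := hinnerlow i
          linarith
        nlinarith [Real.exp_pos (-8:ℝ), Real.exp_pos (8 * ⟪x0, x i⟫)]
      linarith
    have hfac_main : ∀ (q : ℕ),
        (1/2) * (vmfConst d (q:ℝ) * Real.exp (q:ℝ))
          ≤ (1/2) * vmfDensity d x0 (x i₀) (q:ℝ) + (1/2) * vmfDensity d x0 (x i₀) 8 := by
      intro q
      have h2 : 0 ≤ (1/2) * vmfDensity d x0 (x i₀) 8 := by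
        have := (vmfConst_pos d hd 8 le_rfl).le
        rw [vmfDensity]; positivity
      have h1 : vmfDensity d x0 (x i₀) (q:ℝ) = vmfConst d (q:ℝ) * Real.exp (q:ℝ) := by
        rw [vmfDensity, ← hx0def, hinner1, mul_one]
      linarith [h1 ▸ le_refl ((1/2) * vmfDensity d x0 (x i₀) (q:ℝ))]
    -- the product lower bound
    have hprod : ∀ q : ℕ,
        vmfConst d (q:ℝ) * Real.exp (q:ℝ) * ((1/2) * cc^(n-1))
          ≤ ∏ i, ((1/2) * vmfDensity d x0 (x i) (q:ℝ) + (1/2) * vmfDensity d x0 (x i) 8) := by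
      intro q
      set g : Fin n → ℝ := fun i => if i = i₀ then (1/2) * (vmfConst d (q:ℝ) * Real.exp (q:ℝ)) else cc with hg
      have hgle : ∀ i ∈ Finset.univ, g i ≤ (1/2) * vmfDensity d x0 (x i) (q:ℝ) + (1/2) * vmfDensity d x0 (x i) 8 := by
        intro i _
        simp only [hg]
        by_cases h : i = i₀
        · subst h; rw [if_pos rfl]; exact hfac_main q
        · rw [if_neg h]; exact hfac_low q i
      have hgnn : ∀ i ∈ Finset.univ, 0 ≤ g i := by
        intro i _
        simp only [hg]
        by_cases h : i = i₀
        · rw [if_pos h]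
          have h1 := vmfConst_nonneg d hd (q:ℝ) (by positivity)
          positivity
        · rw [if_neg h]; exact hcc0.le
      have hgprod : ∏ i, g i = vmfConst d (q:ℝ) * Real.exp (q:ℝ) * ((1/2) * cc^(n-1)) := by
        rw [← Finset.mul_prod_erase Finset.univ g (Finset.mem_univ i₀)]
        have h1 : g i₀ = (1/2) * (vmfConst d (q:ℝ) * Real.exp (q:ℝ)) := if_pos rfl
        have h2 : ∏ i ∈ Finset.univ.erase i₀, g i = cc^(n-1) := by
          rw [Finset.prod_congr rfl (fun i hi => if_neg (Finset.ne_of_mem_erase hi))]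
          rw [Finset.prod_const, Finset.card_erase_of_mem (Finset.mem_univ i₀),
            Finset.card_univ, Fintype.card_fin]
        rw [h1, h2]; ring
      calc vmfConst d (q:ℝ) * Real.exp (q:ℝ) * ((1/2) * cc^(n-1)) = ∏ i, g i := hgprod.symm
        _ ≤ _ := Finset.prod_le_prod hgnn hgle
    -- assemble
    have htend : Tendsto (fun q : ℕ => vmfConst d (q:ℝ) * Real.exp (q:ℝ) * ((1/2) * cc^(n-1)))
        atTop atTop := by
      apply Tendsto.atTop_mul_const (by positivity) (vmf_growth d hd)
    apply tendsto_atTop_mono _ htend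
    intro q
    calc vmfConst d (q:ℝ) * Real.exp (q:ℝ) * ((1/2) * cc^(n-1))
        ≤ ∏ i, ((1/2) * vmfDensity d x0 (x i) (q:ℝ) + (1/2) * vmfDensity d x0 (x i) 8) := hprod q
      _ = ∏ i, ∑ k, ((if k = k0 then (1/2:ℝ) else 0) + (if k = k1 then (1/2:ℝ) else 0)) *
            vmfDensity d x0 (x i) (if k = k0 then (q:ℝ) else 8) := by
          exact Finset.prod_congr rfl (fun i _ => (hsum q i).symm)
end

section
/- If x, μ ∈ S^{d-1} satisfy arccos(xᵀμ) > 1/(log κ)² for κ large, then the vMF log-density satisfies log(c_d(κ) e^{κ xᵀμ}) ≤ log κ − κ/(4 (log κ)^4) for all sufficiently large κ. -/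
open scoped RealInnerProductSpace BigOperators ENNReal NNReal Classical
open MeasureTheory Filter Real ProbabilityTheory Asymptotics

set_option maxHeartbeats 1000000

-- Stirling upper bound for factorial
lemma aux_factorial_le (n : ℕ) (hn : 1 ≤ n) :
    (n.factorial : ℝ) ≤ Real.exp 1 * n * ((n : ℝ) / Real.exp 1) ^ n := by
  obtain ⟨k, rfl⟩ : ∃ k, n = k + 1 := ⟨n - 1, by omega⟩
  have h := Stirling.stirlingSeq'_antitone (Nat.zero_le k)
  simp only [Function.comp] at h
  rw [Stirling.stirlingSeq_one] at h
  set n := k + 1 with hndef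
  have hn1 : (1 : ℝ) ≤ (n : ℝ) := by exact_mod_cast hn
  have hD : (0:ℝ) < Real.sqrt (2 * n) * ((n : ℝ) / Real.exp 1) ^ n := by positivity
  have h2 : (n.factorial : ℝ) ≤ Real.exp 1 / Real.sqrt 2 * (Real.sqrt (2 * n) * ((n : ℝ) / Real.exp 1) ^ n) := by
    rw [Stirling.stirlingSeq, Nat.succ_eq_add_one] at h
    exact (div_le_iff₀ hD).mp h
  refine h2.trans ?_
  have hsq : Real.sqrt (2 * n) = Real.sqrt 2 * Real.sqrt n := by
    rw [← Real.sqrt_mul (by norm_num)]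
  have hsn : Real.sqrt (n : ℝ) ≤ (n : ℝ) := by
    nth_rewrite 2 [← Real.sqrt_sq (by positivity : (0:ℝ) ≤ (n:ℝ))]
    exact Real.sqrt_le_sqrt (by nlinarith)
  rw [hsq]
  have h2pos : (0:ℝ) < Real.sqrt 2 := by positivity
  have hpow : (0:ℝ) ≤ ((n : ℝ) / Real.exp 1) ^ n := by positivity
  calc Real.exp 1 / Real.sqrt 2 * (Real.sqrt 2 * Real.sqrt n * ((n : ℝ) / Real.exp 1) ^ n)
      = Real.exp 1 * Real.sqrt n * ((n : ℝ) / Real.exp 1) ^ n := by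
        field_simp
    _ ≤ Real.exp 1 * n * ((n : ℝ) / Real.exp 1) ^ n := by
        have := Real.exp_pos 1
        gcongr

lemma aux_gamma_le (r : ℝ) (hr : 0 ≤ r) (d : ℕ) (hrd : r ≤ d) (m : ℕ) :
    Real.Gamma ((m : ℝ) + r + 1) * (d.factorial : ℝ) ≤
      Real.Gamma (r + 1) * ((m + d).factorial : ℝ) := by
  induction m with
  | zero => simp
  | succ n ih =>
    have h1 : ((n + 1 : ℕ) : ℝ) + r + 1 = ((n : ℝ) + r + 1) + 1 := by push_cast; ring
    rw [h1, Real.Gamma_add_one (by positivity)]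
    have hfac : ((n + 1 + d).factorial : ℝ) = ((n + d : ℕ) + 1) * ((n + d).factorial : ℝ) := by
      have : n + 1 + d = (n + d) + 1 := by omega
      rw [this, Nat.factorial_succ]; push_cast; ring
    have hg : 0 < Real.Gamma ((n : ℝ) + r + 1) := Real.Gamma_pos_of_pos (by positivity)
    have hd2 : ((n : ℝ) + r + 1) ≤ ((n + d : ℕ) : ℝ) + 1 := by push_cast; linarith
    have hgr : 0 < Real.Gamma (r + 1) := Real.Gamma_pos_of_pos (by positivity)
    have hfd : (0:ℝ) < (d.factorial : ℝ) := by exact_mod_cast d.factorial_pos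
    calc ((n : ℝ) + r + 1) * Real.Gamma ((n : ℝ) + r + 1) * (d.factorial : ℝ)
        ≤ (((n + d : ℕ) : ℝ) + 1) * (Real.Gamma (r + 1) * ((n + d).factorial : ℝ)) := by
          rw [mul_assoc]
          exact mul_le_mul hd2 ih (by positivity) (by positivity)
      _ = Real.Gamma (r + 1) * ((n + 1 + d).factorial : ℝ) := by rw [hfac]; ring

lemma aux_fact_add_le (m d : ℕ) : (m + d).factorial ≤ (m + d) ^ d * m.factorial := by
  induction d with
  | zero => simp
  | succ k ih =>
    have h1 : m + (k + 1) = (m + k) + 1 := by omega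
    rw [h1, Nat.factorial_succ]
    calc (m + k + 1) * (m + k).factorial ≤ (m + k + 1) * ((m + k) ^ k * m.factorial) :=
          Nat.mul_le_mul_left _ ih
      _ ≤ (m + (k+1)) ^ (k + 1) * m.factorial := by
          rw [h1, pow_succ]
          have : (m + k) ^ k ≤ (m + k + 1) ^ k := Nat.pow_le_pow_left (by omega) k
          calc (m + k + 1) * ((m + k) ^ k * m.factorial)
              ≤ (m + k + 1) * ((m + k + 1) ^ k * m.factorial) := by
                exact Nat.mul_le_mul_left _ (Nat.mul_le_mul_right _ this)
            _ = (m + k + 1) ^ k * (m + k + 1) * m.factorial := by ring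

noncomputable def bTerm (r z : ℝ) (m : ℕ) : ℝ :=
  (z / 2) ^ (2 * (m : ℝ) + r) / ((Nat.factorial m) * Real.Gamma ((m : ℝ) + r + 1))

lemma bTerm_pos (r z : ℝ) (hr : 0 ≤ r) (hz : 0 < z) (m : ℕ) : 0 < bTerm r z m := by
  unfold bTerm
  have h1 : (0:ℝ) < (z/2) ^ (2 * (m : ℝ) + r) := Real.rpow_pos_of_pos (by linarith) _
  have h2 : (0:ℝ) < (m.factorial : ℝ) := by exact_mod_cast m.factorial_pos
  have h3 : 0 < Real.Gamma ((m : ℝ) + r + 1) := Real.Gamma_pos_of_pos (by positivity)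
  positivity

lemma bTerm_succ (r z : ℝ) (hr : 0 ≤ r) (hz : 0 < z) (m : ℕ) :
    bTerm r z (m + 1) = bTerm r z m * ((z / 2) ^ (2:ℕ) / (((m:ℝ) + 1) * ((m : ℝ) + r + 1))) := by
  unfold bTerm
  have hz2 : (0:ℝ) < z / 2 := by linarith
  have he : 2 * ((m + 1 : ℕ) : ℝ) + r = (2 * (m : ℝ) + r) + (2:ℕ) := by push_cast; ring
  rw [he, Real.rpow_add hz2, Real.rpow_natCast]
  have hgam : Real.Gamma (((m + 1 : ℕ) : ℝ) + r + 1) = ((m : ℝ) + r + 1) * Real.Gamma ((m : ℝ) + r + 1) := by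
    have : ((m + 1 : ℕ) : ℝ) + r + 1 = ((m : ℝ) + r + 1) + 1 := by push_cast; ring
    rw [this, Real.Gamma_add_one (by positivity)]
  rw [hgam, Nat.factorial_succ]
  have h2 : (0:ℝ) < (m.factorial : ℝ) := by exact_mod_cast m.factorial_pos
  have h3 : 0 < Real.Gamma ((m : ℝ) + r + 1) := Real.Gamma_pos_of_pos (by positivity)
  have h4 : ((m:ℝ) + r + 1) ≠ 0 := by positivity
  have h5 : ((m:ℝ) + 1) ≠ 0 := by positivity
  push_cast
  field_simp

lemma bTerm_summable (r z : ℝ) (hr : 0 ≤ r) (hz : 0 < z) : Summable (bTerm r z) := by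
  apply summable_of_ratio_norm_eventually_le (r := 1/2) (by norm_num)
  filter_upwards [eventually_ge_atTop ⌈z ^ 2⌉₊] with m hm
  have hm' : z ^ 2 ≤ (m : ℝ) := le_trans (Nat.le_ceil _) (by exact_mod_cast hm)
  have hpos := bTerm_pos r z hr hz m
  rw [bTerm_succ r z hr hz m]
  rw [Real.norm_eq_abs, Real.norm_eq_abs, abs_of_pos hpos, abs_of_pos]
  · have hmn : (0:ℝ) ≤ (m:ℝ) := Nat.cast_nonneg m
    have hd0 : (0:ℝ) < ((m:ℝ) + 1) * ((m : ℝ) + r + 1) := by nlinarith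
    have hfrac : (z / 2) ^ (2:ℕ) / (((m:ℝ) + 1) * ((m : ℝ) + r + 1)) ≤ 1/2 := by
      rw [div_le_iff₀ hd0]
      have h1 : (1:ℝ) ≤ (m:ℝ) + r + 1 := by linarith
      have h2 : z ^ 2 ≤ (m:ℝ) + 1 := by linarith
      nlinarith [sq_nonneg z]
    calc bTerm r z m * ((z / 2) ^ (2:ℕ) / (((m:ℝ) + 1) * ((m : ℝ) + r + 1)))
        ≤ bTerm r z m * (1/2) := by
          apply mul_le_mul_of_nonneg_left hfrac hpos.le
      _ = 1/2 * bTerm r z m := by ring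
  · rw [← bTerm_succ r z hr hz m]; exact bTerm_pos r z hr hz (m+1)


lemma besselI_lower (d : ℕ) (hd : 2 ≤ d) :
    ∀ᶠ κ : ℝ in atTop,
      Real.exp κ / (Real.exp 4 * Real.Gamma ((d:ℝ)/2) * κ ^ (d + 2)) ≤
        ∑' m : ℕ, bTerm ((d:ℝ)/2 - 1) κ m := by
  filter_upwards [eventually_ge_atTop (4:ℝ), eventually_ge_atTop (2*(d:ℝ))] with κ h4 h2d
  have hd2 : (2:ℝ) ≤ (d:ℝ) := by exact_mod_cast hd
  set r : ℝ := (d:ℝ)/2 - 1 with hrdef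
  have hr : 0 ≤ r := by rw [hrdef]; linarith
  have hrd : r ≤ (d:ℝ) := by rw [hrdef]; linarith
  have hκ : (0:ℝ) < κ := by linarith
  set M := ⌊κ/2⌋₊ with hMdef
  have hM1 : (M:ℝ) ≤ κ/2 := Nat.floor_le (by positivity)
  have hM2 : κ/2 < (M:ℝ) + 1 := Nat.lt_floor_add_one _
  have hMge1 : 1 ≤ M := by
    have h1 : ((1:ℕ):ℝ) ≤ κ/2 := by push_cast; linarith
    exact Nat.le_floor h1
  have hM1R : (1:ℝ) ≤ (M:ℝ) := by exact_mod_cast hMge1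
  have hsum := bTerm_summable r κ hr hκ
  have hterm : bTerm r κ M ≤ ∑' m, bTerm r κ m :=
    Summable.le_tsum hsum M (fun j _ => (bTerm_pos r κ hr hκ j).le)
  refine le_trans ?_ hterm
  set E : ℝ := Real.exp 1 with hEdef
  have hEpos : 0 < E := Real.exp_pos 1
  set P : ℝ := (M:ℝ) ^ (2*M) with hPdef
  have hPpos : 0 < P := by positivity
  set Q : ℝ := ((M:ℝ)/E) ^ M with hQdef
  have hQpos : 0 < Q := by positivity
  -- numerator lower bound
  have hnum : P ≤ (κ/2) ^ (2 * (M:ℝ) + r) := by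
    have e1 : (κ/2) ^ (2*(M:ℝ) + r) = (κ/2) ^ ((2*M : ℕ):ℝ) * (κ/2) ^ r := by
      rw [← Real.rpow_add (by linarith : (0:ℝ) < κ/2)]
      norm_num [mul_comm]
    have e2 : (κ/2) ^ ((2*M:ℕ):ℝ) = (κ/2) ^ (2*M : ℕ) := Real.rpow_natCast _ _
    have h1 : (1:ℝ) ≤ (κ/2) ^ r := by
      have h := Real.rpow_le_rpow_of_exponent_le (by linarith : (1:ℝ) ≤ κ/2) hr
      rwa [Real.rpow_zero] at h
    have h2 : P ≤ (κ/2) ^ (2*M : ℕ) := pow_le_pow_left₀ (by positivity) hM1 _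
    calc P ≤ (κ/2) ^ (2*M:ℕ) := h2
      _ = (κ/2) ^ (2*M:ℕ) * 1 := by ring
      _ ≤ (κ/2) ^ ((2*M:ℕ):ℝ) * (κ/2) ^ r := by
          rw [e2]; exact mul_le_mul_of_nonneg_left h1 (by positivity)
      _ = (κ/2) ^ (2*(M:ℝ) + r) := e1.symm
  -- Gamma upper bound
  have hgampos : 0 < Real.Gamma ((M:ℝ) + r + 1) := Real.Gamma_pos_of_pos (by positivity)
  have hgr : 0 < Real.Gamma (r + 1) := Real.Gamma_pos_of_pos (by positivity)
  have hMd : ((M + d : ℕ):ℝ) ≤ κ := by push_cast; linarith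
  have hgam : Real.Gamma ((M:ℝ) + r + 1) ≤ Real.Gamma (r+1) * (κ ^ d * (M.factorial : ℝ)) := by
    have h1 := aux_gamma_le r hr d hrd M
    have hd1 : (1:ℝ) ≤ (d.factorial : ℝ) := by exact_mod_cast d.factorial_pos
    have h2 : Real.Gamma ((M:ℝ) + r + 1) ≤ Real.Gamma (r+1) * ((M+d).factorial : ℝ) := by
      nlinarith
    refine h2.trans ?_
    have h3 : ((M+d).factorial : ℝ) ≤ ((M+d:ℕ):ℝ) ^ d * (M.factorial : ℝ) := by
      exact_mod_cast aux_fact_add_le M d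
    have h4' : ((M+d:ℕ):ℝ) ^ d ≤ κ ^ d := pow_le_pow_left₀ (by positivity) hMd d
    have hMf : (0:ℝ) < (M.factorial : ℝ) := by exact_mod_cast M.factorial_pos
    calc Real.Gamma (r+1) * ((M+d).factorial : ℝ)
        ≤ Real.Gamma (r+1) * (((M+d:ℕ):ℝ) ^ d * (M.factorial : ℝ)) := by
          exact mul_le_mul_of_nonneg_left h3 hgr.le
      _ ≤ Real.Gamma (r+1) * (κ ^ d * (M.factorial : ℝ)) := by
          have := mul_le_mul_of_nonneg_right h4' hMf.le
          exact mul_le_mul_of_nonneg_left this hgr.le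
  -- Stirling
  have hst : (M.factorial : ℝ) ≤ E * M * Q := aux_factorial_le M hMge1
  have hMfpos : (0:ℝ) < (M.factorial : ℝ) := by exact_mod_cast M.factorial_pos
  -- den bound
  have hden : (M.factorial : ℝ) * Real.Gamma ((M:ℝ) + r + 1)
      ≤ Real.Gamma (r+1) * κ ^ d * (E * M)^2 * Q^2 := by
    calc (M.factorial : ℝ) * Real.Gamma ((M:ℝ) + r + 1)
        ≤ (E * M * Q) * (Real.Gamma (r+1) * (κ ^ d * (E * M * Q))) := by
          exact mul_le_mul hst (hgam.trans (by
            have : (M.factorial : ℝ) ≤ E * M * Q := hst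
            exact mul_le_mul_of_nonneg_left (mul_le_mul_of_nonneg_left this (by positivity)) hgr.le))
            hgampos.le (by positivity)
      _ = Real.Gamma (r+1) * κ ^ d * (E * M)^2 * Q^2 := by ring
  -- Q^2 * exp(2M) = P
  have hQP : Q^2 * Real.exp (2*(M:ℝ)) = P := by
    have hE2 : Real.exp (2*(M:ℝ)) = E ^ (2*M) := by
      rw [hEdef, ← Real.exp_nat_mul]
      congr 1
      push_cast; ring
    rw [hQdef, hPdef, div_pow, hE2]
    have hEM : E ^ M ≠ 0 := by positivity
    field_simp
    ring
  -- final assembly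
  have hexpκ : Real.exp κ ≤ Real.exp (2*(M:ℝ)) * Real.exp 2 := by
    rw [← Real.exp_add]; exact Real.exp_le_exp.mpr (by linarith)
  have hE2' : E^2 = Real.exp 2 := by rw [hEdef, sq, ← Real.exp_add]; norm_num
  have hM2κ : (M:ℝ)^2 ≤ κ^2 := by nlinarith
  have hgrw : Real.Gamma (r+1) = Real.Gamma ((d:ℝ)/2) := by rw [hrdef]; ring_nf
  have hdenpos : 0 < (M.factorial : ℝ) * Real.Gamma ((M:ℝ) + r + 1) := by positivity
  have hgd : 0 < Real.Gamma ((d:ℝ)/2) := by rw [← hgrw]; exact hgr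
  have hCpos : 0 < Real.exp 4 * Real.Gamma ((d:ℝ)/2) * κ^(d+2) := by positivity
  have he4 : Real.exp 2 * Real.exp 2 = Real.exp 4 := by rw [← Real.exp_add]; norm_num
  have hκpow : κ^d * κ^2 = κ^(d+2) := (pow_add κ d 2).symm
  show Real.exp κ / (Real.exp 4 * Real.Gamma ((d:ℝ)/2) * κ ^ (d + 2)) ≤ bTerm r κ M
  unfold bTerm
  rw [div_le_div_iff₀ hCpos (by exact_mod_cast hdenpos)]
  have step : Real.exp κ * ((M.factorial : ℝ) * Real.Gamma ((M:ℝ) + r + 1))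
      ≤ Real.exp 4 * Real.Gamma ((d:ℝ)/2) * κ^(d+2) * P := by
    calc Real.exp κ * ((M.factorial : ℝ) * Real.Gamma ((M:ℝ) + r + 1))
        ≤ (Real.exp (2*(M:ℝ)) * Real.exp 2) * (Real.Gamma (r+1) * κ ^ d * (E * M)^2 * Q^2) :=
          mul_le_mul hexpκ hden hdenpos.le (by positivity)
      _ = Real.exp 2 * Real.exp 2 * Real.Gamma (r+1) * κ^d * (M:ℝ)^2 * (Q^2 * Real.exp (2*(M:ℝ))) := by
          rw [mul_pow, hE2']; ring
      _ = Real.exp 2 * Real.exp 2 * Real.Gamma (r+1) * κ^d * (M:ℝ)^2 * P := by rw [hQP]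
      _ ≤ Real.exp 2 * Real.exp 2 * Real.Gamma (r+1) * κ^d * κ^2 * P := by
          have hc : 0 ≤ Real.exp 2 * Real.exp 2 * Real.Gamma (r+1) * κ^d := by positivity
          have := mul_le_mul_of_nonneg_left hM2κ hc
          exact mul_le_mul_of_nonneg_right (by linarith) hPpos.le
      _ = Real.exp 4 * Real.Gamma ((d:ℝ)/2) * κ^(d+2) * P := by
          rw [← he4, ← hκpow, hgrw]; ring
  refine step.trans ?_
  calc Real.exp 4 * Real.Gamma ((d:ℝ)/2) * κ^(d+2) * P
      ≤ Real.exp 4 * Real.Gamma ((d:ℝ)/2) * κ^(d+2) * (κ/2) ^ (2*(M:ℝ) + r) :=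
        mul_le_mul_of_nonneg_left hnum hCpos.le
    _ = (κ/2) ^ (2*(M:ℝ) + r) * (Real.exp 4 * Real.Gamma ((d:ℝ)/2) * κ^(d+2)) := by ring

/-- away from the mean direction, the vMF log-density is at most
`log κ - κ/(4 (log κ)^4)` for large `κ`. -/
theorem vmf_logdensity_bound (d : ℕ) (hd : 2 ≤ d) :
    ∃ κ0 : ℝ, ∀ κ ≥ κ0, ∀ x μ : EuclideanSpace ℝ (Fin d), ‖x‖ = 1 → ‖μ‖ = 1 →
      1 / Real.log κ ^ 2 < Real.arccos ⟪x, μ⟫ →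
      Real.log (vmfConst d κ * Real.exp (κ * ⟪x, μ⟫)) ≤
        Real.log κ - κ / (4 * Real.log κ ^ 4) := by
  have hd2 : (2:ℝ) ≤ (d:ℝ) := by exact_mod_cast hd
  have hgd : 0 < Real.Gamma ((d:ℝ)/2) := Real.Gamma_pos_of_pos (by positivity)
  set B : ℝ := Real.exp 4 * Real.Gamma ((d:ℝ)/2) with hBdef
  have hBpos : 0 < B := by positivity
  have hcpos : 0 < (1:ℝ) / (12 * (|Real.log B| + (2*(d:ℝ)+1))) := by positivity
  have hlog := (isLittleO_pow_log_id_atTop (n := 5)).bound hcpos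
  have hEv : ∀ᶠ κ : ℝ in atTop, ∀ x μ : EuclideanSpace ℝ (Fin d), ‖x‖ = 1 → ‖μ‖ = 1 →
      1 / Real.log κ ^ 2 < Real.arccos ⟪x, μ⟫ →
      Real.log (vmfConst d κ * Real.exp (κ * ⟪x, μ⟫)) ≤
        Real.log κ - κ / (4 * Real.log κ ^ 4) := by
    filter_upwards [besselI_lower d hd, hlog, eventually_ge_atTop (4:ℝ),
      Real.tendsto_log_atTop.eventually_ge_atTop 1] with κ hI hL5 h4 hL1
    intro x μ hx hμ hangle
    have hκpos : (0:ℝ) < κ := by linarith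
    set L := Real.log κ with hLdef
    have hLpos : (0:ℝ) < L := by linarith
    -- inner product bound
    have habs : |⟪x, μ⟫| ≤ 1 := by
      have h := abs_real_inner_le_norm x μ
      rwa [hx, hμ, mul_one] at h
    have hs0 : (0:ℝ) < 1/L^2 := by positivity
    have hs1 : 1/L^2 ≤ 1 := by
      rw [div_le_one (by positivity)]; nlinarith
    have hcos1 : ⟪x, μ⟫ ≤ Real.cos (1/L^2) := by
      have h1 := Real.cos_le_cos_of_nonneg_of_le_pi hs0.le (Real.arccos_le_pi ⟪x, μ⟫) hangle.le
      rwa [Real.cos_arccos (by linarith [(abs_le.mp habs).1]) (by linarith [(abs_le.mp habs).2])] at h1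
    have hcos2 : Real.cos (1/L^2) ≤ 1 - (1/L^2)^2/3 := by
      have hb := Real.cos_bound (x := 1/L^2) (by rw [abs_of_pos hs0]; exact hs1)
      rw [abs_of_pos hs0] at hb
      have hb2 := (abs_le.mp hb).2
      have h4s : (1/L^2)^4 ≤ (1/L^2)^2 := pow_le_pow_of_le_one hs0.le hs1 (by norm_num)
      linarith [hb2, h4s, pow_nonneg hs0.le 2]
    have hsq : (1/L^2)^2 = 1/L^4 := by
      rw [div_pow, one_pow, ← pow_mul]
    have hcost : ⟪x, μ⟫ ≤ 1 - 1/(3*L^4) := by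
      rw [hsq] at hcos2
      have : 1 - (1/L^4)/3 = 1 - 1/(3*L^4) := by ring
      linarith [hcos1, hcos2, this.le]
    -- vmfConst bound
    set r : ℝ := (d:ℝ)/2 - 1 with hrdef
    have hIb : Real.exp κ / (B * κ^(d+2)) ≤ besselI r κ := by
      rw [show besselI r κ = ∑' m : ℕ, bTerm r κ m from rfl, hBdef]
      exact hI
    have htpos : 0 < Real.exp κ / (B * κ^(d+2)) := by positivity
    have hIpos : 0 < besselI r κ := lt_of_lt_of_le htpos hIb
    have hπ1 : (1:ℝ) ≤ 2 * Real.pi := by nlinarith [Real.pi_gt_three]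
    have hdenpos : 0 < (2*Real.pi)^((d:ℝ)/2) * besselI r κ :=
      mul_pos (Real.rpow_pos_of_pos (by linarith) _) hIpos
    have hvcpos : 0 < vmfConst d κ := by
      have e0 : vmfConst d κ = κ ^ r / ((2*Real.pi)^((d:ℝ)/2) * besselI r κ) := rfl
      rw [e0]
      exact div_pos (Real.rpow_pos_of_pos hκpos _) hdenpos
    have hlogc : Real.log (vmfConst d κ) ≤ Real.log B + (2*(d:ℝ)+2)*L - κ := by
      have e0 : vmfConst d κ = κ ^ r / ((2*Real.pi)^((d:ℝ)/2) * besselI r κ) := rfl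
      rw [e0, Real.log_div (by positivity) (ne_of_gt hdenpos), Real.log_rpow hκpos,
        Real.log_mul (by positivity) (ne_of_gt hIpos),
        Real.log_rpow (by linarith : (0:ℝ) < 2*Real.pi)]
      have hlog2π : 0 ≤ Real.log (2*Real.pi) := Real.log_nonneg hπ1
      have hlogI : κ - (Real.log B + ((d:ℝ)+2) * L) ≤ Real.log (besselI r κ) := by
        have h1 := Real.log_le_log htpos hIb
        rw [Real.log_div (Real.exp_ne_zero κ) (by positivity), Real.log_exp,
            Real.log_mul (ne_of_gt hBpos) (by positivity), Real.log_pow] at h1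
        push_cast at h1
        linarith
      have hrL : r * L ≤ (d:ℝ) * L := by
        have h2 : r ≤ (d:ℝ) := by rw [hrdef]; linarith
        exact mul_le_mul_of_nonneg_right h2 hLpos.le
      have hd2pos : 0 ≤ (d:ℝ)/2 := by positivity
      have hmm : 0 ≤ (d:ℝ)/2 * Real.log (2*Real.pi) := mul_nonneg hd2pos hlog2π
      have hdd : (d:ℝ) * L + ((d:ℝ)+2) * L = (2*(d:ℝ)+2)*L := by ring
      rw [← hLdef]
      nlinarith [hrL, hlogI, hmm, hdd]
    -- asymptotic inequality
    have hnorm : L^5 ≤ 1 / (12 * (|Real.log B| + (2*(d:ℝ)+1))) * κ := by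
      have h1 : ‖L^5‖ = L^5 := by rw [Real.norm_eq_abs, abs_of_pos (by positivity)]
      have h2 : ‖id κ‖ = κ := by
        simp only [id_eq, Real.norm_eq_abs]; rw [abs_of_pos hκpos]
      rw [h1, h2] at hL5
      exact hL5
    have hA : 0 < 12 * (|Real.log B| + (2*(d:ℝ)+1)) := by positivity
    have h12 : (|Real.log B| + (2*(d:ℝ)+1)) * L ≤ κ / (12 * L^4) := by
      rw [le_div_iff₀ (by positivity)]
      rw [one_div, inv_mul_eq_div, le_div_iff₀ hA] at hnorm
      calc (|Real.log B| + (2*(d:ℝ)+1)) * L * (12 * L^4)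
          = L^5 * (12 * (|Real.log B| + (2*(d:ℝ)+1))) := by ring
        _ ≤ κ := hnorm
    have h12' : |Real.log B| * L + (2*(d:ℝ)+1) * L ≤ κ / (12*L^4) := by
      have he : |Real.log B| * L + (2*(d:ℝ)+1) * L = (|Real.log B| + (2*(d:ℝ)+1)) * L := by
        ring
      rw [he]
      exact h12
    have hbb : Real.log B ≤ |Real.log B| * L := by
      nlinarith [le_abs_self (Real.log B), abs_nonneg (Real.log B)]
    -- conclusion
    rw [Real.log_mul (ne_of_gt hvcpos) (Real.exp_ne_zero _), Real.log_exp]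
    have hκt : κ * ⟪x, μ⟫ ≤ κ * (1 - 1/(3*L^4)) := mul_le_mul_of_nonneg_left hcost hκpos.le
    have e1 : κ * (1 - 1/(3*L^4)) = κ - 4*(κ/(12*L^4)) := by ring
    rw [e1] at hκt
    have e2 : κ/(4*L^4) = 3*(κ/(12*L^4)) := by ring
    have hLL : (2*(d:ℝ)+2)*L = (2*(d:ℝ)+1)*L + L := by ring
    rw [show Real.log κ - κ / (4 * Real.log κ ^ 4) = L - κ/(4*L^4) from by rw [← hLdef], e2]
    linarith [hlogc, hκt, h12', hbb, hLL]
  obtain ⟨κ0, hκ0⟩ := eventually_atTop.mp hEv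
  exact ⟨κ0, hκ0⟩
end
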